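/- Let Y be a set with a map d₀ : Y → k[Y] into the commutative polynomial algebra. Define d on a monomial w = u₁⋯u_k (u_i ∈ Y) recursively by d(w) = d₀(u₁)u₂⋯u_k + u₁ d(u₂⋯u_k) + λ d₀(u₁) d(u₂⋯u_k), set d(1) = 0, and extend linearly. Then (k[Y], d) is a differential algebra of weight λ, i.e., d(fg) = d(f)g + f d(g) + λ d(f)d(g) for all f, g ∈ k[Y]. -/

import Mathlib

open MvPolynomial

/-- given d₀ : Y → k[Y], the linear map d on k[Y] defined on
monomials by the recursion d(u₁⋯u_k) = d₀(u₁)u₂⋯u_k + u₁d(u₂⋯u_k)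
+ λd₀(u₁)d(u₂⋯u_k) and d(1) = 0 makes (k[Y], d) a differential algebra of
weight λ. -/
theorem recursive_extension_is_weighted_derivation
    {k Y : Type*} [CommRing k] (lam : k)
    (d0 : Y → MvPolynomial Y k) (d : MvPolynomial Y k →ₗ[k] MvPolynomial Y k)
    (hone : d 1 = 0)
    (hrec : ∀ (u : Y) (s : Y →₀ ℕ),
      d (X u * monomial s 1) =
        d0 u * monomial s 1 + X u * d (monomial s 1)
          + lam • (d0 u * d (monomial s 1))) :
    ∀ f g : MvPolynomial Y k,
      d (f * g) = d f * g + f * d g + lam • (d f * d g) := by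
  simp only [MvPolynomial.smul_eq_C_mul] at hrec ⊢
  have hXone : ∀ u : Y, d (X u) = d0 u := by
    intro u
    have h := hrec u 0
    simp only [monomial_zero', C_1, mul_one, hone, mul_zero, add_zero] at h
    exact h
  have hX : ∀ (u : Y) (g : MvPolynomial Y k),
      d (X u * g) = d0 u * g + X u * d g + C lam * (d0 u * d g) := by
    intro u g
    induction g using MvPolynomial.induction_on' with
    | monomial s a =>
      have h : (monomial s a : MvPolynomial Y k) = a • monomial s 1 := by
        rw [MvPolynomial.smul_eq_C_mul, C_mul_monomial, mul_one]
      rw [h, mul_smul_comm, map_smul, hrec u s, map_smul]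
      simp only [MvPolynomial.smul_eq_C_mul]
      ring
    | add p q hp hq =>
      rw [mul_add, map_add, hp, hq, map_add]; ring
  intro f g
  induction f using MvPolynomial.induction_on generalizing g with
  | C a =>
    have hCa : (C a : MvPolynomial Y k) = a • 1 := by
      rw [MvPolynomial.smul_eq_C_mul, mul_one]
    have hdC : d (C a) = 0 := by rw [hCa, map_smul, hone, smul_zero]
    have hmul : C a * g = a • g := by rw [MvPolynomial.smul_eq_C_mul]
    rw [hdC, hmul, map_smul]
    simp only [MvPolynomial.smul_eq_C_mul]
    ring
  | add p q hp hq =>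
    rw [add_mul, map_add, hp, hq, map_add]; ring
  | mul_X p u hp =>
    have h1 : d (p * X u) = d p * X u + p * d0 u + C lam * (d p * d0 u) := by
      rw [mul_comm p (X u), hX u p]; ring
    rw [mul_assoc, hp (X u * g), hX u g, h1]
    ring
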